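/- Let β > 0, α̃ = -2(β/3)^{3/2}, and λ̃ = √2·(β/3)^{3/4} or λ̃ = -√2·(β/3)^{3/4} (equivalently, λ̃² = -α̃). Then -g_wcusp(u, λ̃, α̃, β, 0) = u³ - βu for all u, and the functions u₊(t) = √β·tanh(√(β/2)·t) and u₋(t) = -√β·tanh(√(β/2)·t) satisfy u''(t) = -g_wcusp(u(t), λ̃, α̃, β, 0) for all t, with (u₊(t), u₊'(t)) → (√β, 0) as t → +∞ and → (-√β, 0) as t → -∞, and symmetrically for u₋. Hence at each of these two values of λ̃ the standing layer dynamics u' = v, v' = -g_wcusp(u, λ̃, α̃, β, 0) possesses both an upward and a downward heteroclinic front connecting the equilibria (-√β, 0) and (√β, 0). -/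

import Mathlib

open Real Filter

/-- The winged-cusp unfolding `g_wcusp(u,λ,α,β,γ) = -u³ - λ² - α + βu + γuλ`. -/
noncomputable def gwcusp (u lam alp bet gam : ℝ) : ℝ :=
  -u ^ 3 - lam ^ 2 - alp + bet * u + gam * u * lam

lemma tanh_hda (x : ℝ) : HasDerivAt Real.tanh (1 - Real.tanh x ^ 2) x := by
  have h := (Real.hasDerivAt_sinh x).div (Real.hasDerivAt_cosh x) (Real.cosh_pos x).ne'
  have hfun : (fun y => Real.sinh y / Real.cosh y) = Real.tanh := by
    funext y; rw [Real.tanh_eq_sinh_div_cosh]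
  change HasDerivAt (fun y => Real.sinh y / Real.cosh y) _ x at h
  rw [hfun] at h
  convert h using 1
  have hc := (Real.cosh_pos x).ne'
  rw [Real.tanh_eq_sinh_div_cosh]
  field_simp

lemma tanh_eq' (x : ℝ) : Real.tanh x = 1 - 2 / (Real.exp (2*x) + 1) := by
  rw [Real.tanh_eq_sinh_div_cosh, Real.sinh_eq, Real.cosh_eq]
  have h1 : Real.exp (2*x) = Real.exp x * Real.exp x := by rw [two_mul, Real.exp_add]
  have h2 : Real.exp (-x) = (Real.exp x)⁻¹ := Real.exp_neg x
  have h3 : Real.exp x ≠ 0 := (Real.exp_pos x).ne'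
  have h4 : Real.exp (2*x) + 1 ≠ 0 := by positivity
  rw [h1, h2] at *
  field_simp
  ring

lemma tanh_atTop : Tendsto Real.tanh atTop (nhds 1) := by
  have hexp : Tendsto (fun x : ℝ => Real.exp (2*x) + 1) atTop atTop :=
    tendsto_atTop_add_const_right _ 1
      (Real.tendsto_exp_atTop.comp (tendsto_id.const_mul_atTop two_pos))
  have h0 : Tendsto (fun x : ℝ => 2 / (Real.exp (2*x) + 1)) atTop (nhds 0) :=
    Tendsto.div_atTop tendsto_const_nhds hexp
  have h1 : Tendsto (fun x : ℝ => 1 - 2 / (Real.exp (2*x) + 1)) atTop (nhds (1 - 0)) :=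
    (tendsto_const_nhds (α := ℝ)).sub h0
  simp only [sub_zero] at h1
  convert h1 using 2 with x
  exact tanh_eq' x

lemma tanh_atBot : Tendsto Real.tanh atBot (nhds (-1)) := by
  have hexp : Tendsto (fun x : ℝ => Real.exp (2*x)) atBot (nhds 0) :=
    Real.tendsto_exp_atBot.comp (tendsto_id.const_mul_atBot two_pos)
  have h0 : Tendsto (fun x : ℝ => 2 / (Real.exp (2*x) + 1)) atBot (nhds 2) := by
    have h := (tendsto_const_nhds (α := ℝ) (x := (2:ℝ))).div
      (hexp.add (tendsto_const_nhds (α := ℝ) (x := (1:ℝ)))) (by norm_num : (0:ℝ)+1 ≠ 0)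
    simpa [Pi.div_def] using h
  have h2 : Tendsto (fun x : ℝ => 1 - 2 / (Real.exp (2*x) + 1)) atBot (nhds (1 - 2)) :=
    (tendsto_const_nhds (α := ℝ)).sub h0
  have h1 : (1:ℝ) - 2 = -1 := by norm_num
  rw [h1] at h2
  convert h2 using 2 with x
  exact tanh_eq' x

lemma prof_hda (A c t : ℝ) :
    HasDerivAt (fun t => A * Real.tanh (c * t)) (A * c * (1 - Real.tanh (c*t) ^ 2)) t := by
  have h1 : HasDerivAt (fun t : ℝ => c * t) c t := by
    simpa using (hasDerivAt_id t).const_mul c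
  have h2 := (tanh_hda (c * t)).comp t h1
  have h3 := h2.const_mul A
  exact h3.congr_deriv (by ring)

lemma prof_deriv (A c : ℝ) :
    deriv (fun t => A * Real.tanh (c * t)) = fun t => A * c * (1 - Real.tanh (c*t) ^ 2) := by
  funext t; exact (prof_hda A c t).deriv

lemma prof_hda2 (A c t : ℝ) :
    HasDerivAt (fun t => A * c * (1 - Real.tanh (c*t) ^ 2))
      (A * c * c * (-2 * Real.tanh (c*t) * (1 - Real.tanh (c*t) ^ 2))) t := by
  have h1 : HasDerivAt (fun t : ℝ => c * t) c t := by
    simpa using (hasDerivAt_id t).const_mul c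
  have h2 : HasDerivAt (fun t : ℝ => Real.tanh (c*t)) ((1 - Real.tanh (c*t) ^ 2) * c) t :=
    (tanh_hda (c * t)).comp t h1
  have h3 := ((h2.pow 2).const_sub 1).const_mul (A * c)
  exact h3.congr_deriv (by push_cast; norm_num; ring)

lemma prof_deriv2 (A c t : ℝ) :
    deriv (deriv (fun t => A * Real.tanh (c * t))) t
      = A * c * c * (-2 * Real.tanh (c*t) * (1 - Real.tanh (c*t) ^ 2)) := by
  rw [prof_deriv]; exact (prof_hda2 A c t).deriv

lemma pair_tendsto (A c L : ℝ) {l : Filter ℝ}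
    (h : Tendsto (fun t => Real.tanh (c * t)) l (nhds L)) (hL : L ^ 2 = 1) :
    Tendsto (fun t => (A * Real.tanh (c * t), A * c * (1 - Real.tanh (c*t) ^ 2))) l
      (nhds (A * L, 0)) := by
  have h1 : Tendsto (fun t => A * Real.tanh (c*t)) l (nhds (A * L)) := h.const_mul A
  have h2 : Tendsto (fun t => A * c * (1 - Real.tanh (c*t) ^ 2)) l
      (nhds (A * c * (1 - L ^ 2))) := ((tendsto_const_nhds (α := ℝ)).sub (h.pow 2)).const_mul _
  rw [hL] at h2
  simp only [sub_self, mul_zero] at h2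
  exact h1.prodMk_nhds h2

/-- Standing fronts at the two special bifurcation values: for `β > 0`,
`α̃ = -2(β/3)^(3/2)` and `λ̃ = ±√2 (β/3)^(3/4)` (so that `λ̃² = -α̃`), the layer
nonlinearity satisfies `-g_wcusp(u, λ̃, α̃, β, 0) = u³ - βu`, and the explicit
profiles `u₊(t) = √β tanh(√(β/2) t)`, `u₋ = -u₊` are heteroclinic fronts of the
standing layer dynamics connecting `(-√β, 0)` and `(√β, 0)`. -/
theorem standing_fronts_at_special_levels
    (bet alpt lamt : ℝ) (hbet : 0 < bet)
    (halpt : alpt = -2 * (bet / 3) ^ ((3 : ℝ) / 2))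
    (hlamt : lamt = Real.sqrt 2 * (bet / 3) ^ ((3 : ℝ) / 4) ∨
             lamt = -(Real.sqrt 2 * (bet / 3) ^ ((3 : ℝ) / 4))) :
    (∀ u : ℝ, -gwcusp u lamt alpt bet 0 = u ^ 3 - bet * u) ∧
    (let up : ℝ → ℝ := fun t => Real.sqrt bet * Real.tanh (Real.sqrt (bet / 2) * t)
     let um : ℝ → ℝ := fun t => -(Real.sqrt bet * Real.tanh (Real.sqrt (bet / 2) * t))
     (∀ t : ℝ, deriv (deriv up) t = -gwcusp (up t) lamt alpt bet 0) ∧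
     Tendsto (fun t => (up t, deriv up t)) atTop (nhds (Real.sqrt bet, 0)) ∧
     Tendsto (fun t => (up t, deriv up t)) atBot (nhds (-Real.sqrt bet, 0)) ∧
     (∀ t : ℝ, deriv (deriv um) t = -gwcusp (um t) lamt alpt bet 0) ∧
     Tendsto (fun t => (um t, deriv um t)) atTop (nhds (-Real.sqrt bet, 0)) ∧
     Tendsto (fun t => (um t, deriv um t)) atBot (nhds (Real.sqrt bet, 0))) := by
  have hb3 : (0:ℝ) < bet / 3 := by linarith
  have hsq : lamt ^ 2 = 2 * (bet / 3) ^ ((3:ℝ)/2) := by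
    have key : ((bet/3) ^ ((3:ℝ)/4)) ^ 2 = (bet/3) ^ ((3:ℝ)/2) := by
      rw [sq, ← Real.rpow_add hb3]; norm_num
    have h2 : Real.sqrt 2 ^ 2 = 2 := Real.sq_sqrt (by norm_num)
    rcases hlamt with h | h <;> rw [h]
    · rw [mul_pow, h2, key]
    · rw [neg_sq, mul_pow, h2, key]
  have halam : lamt ^ 2 + alpt = 0 := by rw [halpt, hsq]; ring
  have hg : ∀ u : ℝ, -gwcusp u lamt alpt bet 0 = u ^ 3 - bet * u := by
    intro u
    simp only [gwcusp]
    linear_combination halam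
  refine ⟨hg, ?_, ?_, ?_, ?_, ?_, ?_⟩
  all_goals
    have hbet2 : (0:ℝ) < bet / 2 := by linarith
    have hc : 0 < Real.sqrt (bet / 2) := Real.sqrt_pos.mpr hbet2
    have hc2 : Real.sqrt (bet / 2) ^ 2 = bet / 2 := Real.sq_sqrt hbet2.le
    have hs2 : Real.sqrt bet ^ 2 = bet := Real.sq_sqrt hbet.le
    have hum : (fun t => -(Real.sqrt bet * Real.tanh (Real.sqrt (bet / 2) * t)))
        = fun t => (-Real.sqrt bet) * Real.tanh (Real.sqrt (bet / 2) * t) := by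
      funext t; ring
    have key : ∀ A : ℝ, A ^ 2 = bet → ∀ t : ℝ,
        deriv (deriv (fun t => A * Real.tanh (Real.sqrt (bet / 2) * t))) t
          = (A * Real.tanh (Real.sqrt (bet / 2) * t)) ^ 3
            - bet * (A * Real.tanh (Real.sqrt (bet / 2) * t)) := by
      intro A hA t
      rw [prof_deriv2]
      set T := Real.tanh (Real.sqrt (bet / 2) * t) with hT
      linear_combination (-2*A*T + 2*A*T^3) * hc2 + (-(T^3) * A) * hA
    have htop : Tendsto (fun t : ℝ => Real.tanh (Real.sqrt (bet / 2) * t)) atTop (nhds 1) :=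
      tanh_atTop.comp (tendsto_id.const_mul_atTop hc)
    have hbot : Tendsto (fun t : ℝ => Real.tanh (Real.sqrt (bet / 2) * t)) atBot (nhds (-1)) :=
      tanh_atBot.comp (tendsto_id.const_mul_atBot hc)
  · intro t
    rw [hg]
    exact key (Real.sqrt bet) hs2 t
  · simp only [prof_deriv]
    have := pair_tendsto (Real.sqrt bet) (Real.sqrt (bet / 2)) 1 htop (one_pow 2)
    simpa using this
  · simp only [prof_deriv]
    have := pair_tendsto (Real.sqrt bet) (Real.sqrt (bet / 2)) (-1) hbot (by norm_num)
    simpa using this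
  · intro t
    rw [hg, hum]
    have := key (-Real.sqrt bet) (by rw [neg_sq]; exact hs2) t
    rw [this]
  · rw [hum]
    simp only [prof_deriv]
    have := pair_tendsto (-Real.sqrt bet) (Real.sqrt (bet / 2)) 1 htop (one_pow 2)
    simpa using this
  · rw [hum]
    simp only [prof_deriv]
    have := pair_tendsto (-Real.sqrt bet) (Real.sqrt (bet / 2)) (-1) hbot (by norm_num)
    simpa using this
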